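/- For x ∈ ℂ define T_x(d) = −(x+d)/(1+xd). Let φ, χ, α ∈ ℝ and define a sequence (x_n), n ∈ ℤ, by x_0 = i·tan(α) and x_{n+1} = T_{i·tan(χ)}(T_{i·tan(φ)}(x_n)), assuming that for all n the quantities cos(α + n(φ−χ)), cos(φ), cos(χ) and the relevant denominators are nonzero. Then x_n = i·tan(α + n(φ − χ)) for all n ∈ ℤ. -/

import Mathlib

open Complex in
private lemma denA (u v : ℝ) (hu : Real.cos u ≠ 0) (hv : Real.cos v ≠ 0) :
    (1 : ℂ) + (I * Real.tan v) * (I * Real.tan u) =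
      (Real.cos (u + v) : ℂ) / ((Real.cos u : ℂ) * (Real.cos v : ℂ)) := by
  have Hu : (Real.cos u : ℂ) ≠ 0 := by exact_mod_cast hu
  have Hv : (Real.cos v : ℂ) ≠ 0 := by exact_mod_cast hv
  have Hu' : Complex.cos u ≠ 0 := by rw [← Complex.ofReal_cos]; exact Hu
  have Hv' : Complex.cos v ≠ 0 := by rw [← Complex.ofReal_cos]; exact Hv
  rw [Real.tan_eq_sin_div_cos, Real.tan_eq_sin_div_cos, Real.cos_add]
  field_simp
  ring_nf
  simp [Complex.I_sq]
  field_simp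

open Complex in
private lemma denB (w χ : ℝ) (hw : Real.cos w ≠ 0) (hχ : Real.cos χ ≠ 0) :
    (1 : ℂ) + (I * Real.tan χ) * (-(I * Real.tan w)) =
      (Real.cos (w - χ) : ℂ) / ((Real.cos w : ℂ) * (Real.cos χ : ℂ)) := by
  have Hw : (Real.cos w : ℂ) ≠ 0 := by exact_mod_cast hw
  have Hχ : (Real.cos χ : ℂ) ≠ 0 := by exact_mod_cast hχ
  have Hw' : Complex.cos w ≠ 0 := by rw [← Complex.ofReal_cos]; exact Hw
  have Hχ' : Complex.cos χ ≠ 0 := by rw [← Complex.ofReal_cos]; exact Hχ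
  rw [Real.tan_eq_sin_div_cos, Real.tan_eq_sin_div_cos, Real.cos_sub]
  field_simp
  ring_nf
  simp [Complex.I_sq]
  field_simp

open Complex in
private lemma stepA (u v : ℝ) (hu : Real.cos u ≠ 0) (hv : Real.cos v ≠ 0)
    (huv : Real.cos (u + v) ≠ 0) :
    -((I * Real.tan v) + I * Real.tan u) / (1 + (I * Real.tan v) * (I * Real.tan u)) =
      -(I * Real.tan (u + v)) := by
  have Hu : (Real.cos u : ℂ) ≠ 0 := by exact_mod_cast hu
  have Hv : (Real.cos v : ℂ) ≠ 0 := by exact_mod_cast hv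
  have Huv : (Real.cos (u + v) : ℂ) ≠ 0 := by exact_mod_cast huv
  have Hu' : Complex.cos u ≠ 0 := by rw [← Complex.ofReal_cos]; exact Hu
  have Hv' : Complex.cos v ≠ 0 := by rw [← Complex.ofReal_cos]; exact Hv
  have Huv' : Complex.cos (↑u + ↑v) ≠ 0 := by
    rw [← Complex.ofReal_add, ← Complex.ofReal_cos]; exact Huv
  rw [denA u v hu hv, Real.tan_eq_sin_div_cos, Real.tan_eq_sin_div_cos,
    Real.tan_eq_sin_div_cos, Real.sin_add]
  push_cast
  field_simp
  ring

open Complex in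
private lemma stepB (w χ : ℝ) (hw : Real.cos w ≠ 0) (hχ : Real.cos χ ≠ 0)
    (hwχ : Real.cos (w - χ) ≠ 0) :
    -((I * Real.tan χ) + -(I * Real.tan w)) / (1 + (I * Real.tan χ) * (-(I * Real.tan w))) =
      I * Real.tan (w - χ) := by
  have Hw : (Real.cos w : ℂ) ≠ 0 := by exact_mod_cast hw
  have Hχ : (Real.cos χ : ℂ) ≠ 0 := by exact_mod_cast hχ
  have Hwχ : (Real.cos (w - χ) : ℂ) ≠ 0 := by exact_mod_cast hwχ
  have Hw' : Complex.cos w ≠ 0 := by rw [← Complex.ofReal_cos]; exact Hw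
  have Hχ' : Complex.cos χ ≠ 0 := by rw [← Complex.ofReal_cos]; exact Hχ
  have Hwχ' : Complex.cos (↑w - ↑χ) ≠ 0 := by
    rw [← Complex.ofReal_sub, ← Complex.ofReal_cos]; exact Hwχ
  rw [denB w χ hw hχ, Real.tan_eq_sin_div_cos, Real.tan_eq_sin_div_cos,
    Real.tan_eq_sin_div_cos, Real.sin_sub]
  push_cast
  field_simp
  ring

open Complex in
private lemma keyfwd (θ φ χ : ℝ) (hθ : Real.cos θ ≠ 0) (hφ : Real.cos φ ≠ 0)
    (hχ : Real.cos χ ≠ 0) (hs : Real.cos (θ + φ - χ) ≠ 0)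
    (hd1 : 1 + (I * Real.tan φ) * (I * Real.tan θ) ≠ 0) :
    -((I * Real.tan χ) + (-((I * Real.tan φ) + I * Real.tan θ) /
        (1 + (I * Real.tan φ) * (I * Real.tan θ)))) /
      (1 + (I * Real.tan χ) * (-((I * Real.tan φ) + I * Real.tan θ) /
        (1 + (I * Real.tan φ) * (I * Real.tan θ)))) =
    I * Real.tan (θ + φ - χ) := by
  have hsum : Real.cos (θ + φ) ≠ 0 := by
    intro h
    apply hd1
    rw [denA θ φ hθ hφ, h]
    simp
  rw [stepA θ φ hθ hφ hsum]
  exact stepB (θ + φ) χ hsum hχ hs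

private lemma inv1 (t d : ℂ) (h1 : 1 + t * d ≠ 0) :
    1 + t * (-(t + d) / (1 + t * d)) = (1 - t ^ 2) / (1 + t * d) := by
  field_simp
  ring

private lemma inv2 (t d : ℂ) (h1 : 1 + t * d ≠ 0) (h2 : 1 - t ^ 2 ≠ 0) :
    -(t + (-(t + d) / (1 + t * d))) / (1 + t * (-(t + d) / (1 + t * d))) = d := by
  rw [inv1 t d h1, div_eq_iff (div_ne_zero h2 h1)]
  field_simp
  ring

open Complex in
private lemma tsq (f : ℝ) : (1 : ℂ) - (I * (f : ℂ)) ^ 2 ≠ 0 := by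
  have h : (1 : ℂ) - (I * (f : ℂ)) ^ 2 = ((1 + f ^ 2 : ℝ) : ℂ) := by
    push_cast
    ring_nf
    simp [Complex.I_sq]
  rw [h]
  exact_mod_cast (by positivity : (1 : ℝ) + f ^ 2 ≠ 0)

open Complex in
/-- Propagation along a lattice direction: the sequence defined by
`x₀ = i tan α` and `x_{n+1} = T_{i tan χ}(T_{i tan φ}(x_n))`, with
`T_x(d) = -(x+d)/(1+xd)`, is the arithmetic progression in the tangent
parametrization: `x_n = i tan(α + n(φ - χ))`. -/
theorem tangent_progression (φ χ α : ℝ)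
    (hφ : Real.cos φ ≠ 0) (hχ : Real.cos χ ≠ 0)
    (hcos : ∀ n : ℤ, Real.cos (α + n * (φ - χ)) ≠ 0)
    (x : ℤ → ℂ)
    (hx0 : x 0 = I * Real.tan α)
    (hden1 : ∀ n : ℤ, 1 + (I * Real.tan φ) * x n ≠ 0)
    (hden2 : ∀ n : ℤ,
      1 + (I * Real.tan χ) *
        (-((I * Real.tan φ) + x n) / (1 + (I * Real.tan φ) * x n)) ≠ 0)
    (hrec : ∀ n : ℤ, x (n + 1) =
      -((I * Real.tan χ) +
          (-((I * Real.tan φ) + x n) / (1 + (I * Real.tan φ) * x n))) /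
        (1 + (I * Real.tan χ) *
          (-((I * Real.tan φ) + x n) / (1 + (I * Real.tan φ) * x n)))) :
    ∀ n : ℤ, x n = I * Real.tan (α + n * (φ - χ)) := by
  intro n
  induction n using Int.induction_on with
  | zero => simpa using hx0
  | succ k ih =>
    have hθ := hcos k
    have hd1 := hden1 k
    rw [ih] at hd1
    have hs : Real.cos (α + (k : ℤ) * (φ - χ) + φ - χ) ≠ 0 := by
      have h := hcos ((k : ℤ) + 1)
      convert h using 2
      push_cast
      ring
    have hkey := keyfwd (α + (k : ℤ) * (φ - χ)) φ χ hθ hφ hχ hs hd1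
    rw [hrec k, ih, hkey]
    congr 2
    push_cast
    ring
  | pred k ih =>
    have hrm := hrec (-(k : ℤ) - 1)
    have hd1 := hden1 (-(k : ℤ) - 1)
    have hd2 := hden2 (-(k : ℤ) - 1)
    have ht1 := tsq (Real.tan φ)
    have ht2 := tsq (Real.tan χ)
    have hm1 : (-(k : ℤ) - 1) + 1 = -(k : ℤ) := by ring
    rw [hm1, ih] at hrm
    -- hrm : I * tan θ' = T_{t2}(w) where w = T_{t1}(x (-k-1))
    have e1 := inv2 (I * (Real.tan χ : ℂ))
      (-((I * (Real.tan φ : ℂ)) + x (-(k : ℤ) - 1)) /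
        (1 + (I * (Real.tan φ : ℂ)) * x (-(k : ℤ) - 1))) hd2 ht2
    rw [← hrm] at e1
    have e1d : 1 + (I * (Real.tan χ : ℂ)) *
        (I * (Real.tan (α + (-(k : ℤ) : ℤ) * (φ - χ)) : ℂ)) ≠ 0 := by
      rw [hrm, inv1 _ _ hd2]
      exact div_ne_zero ht2 hd2
    have hθ' := hcos (-(k : ℤ))
    have hsm : Real.cos (α + (-(k : ℤ) : ℤ) * (φ - χ) + χ - φ) ≠ 0 := by
      have h := hcos (-(k : ℤ) - 1)
      convert h using 2
      push_cast
      ring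
    have hkey := keyfwd (α + (-(k : ℤ) : ℤ) * (φ - χ)) χ φ hθ' hχ hφ hsm e1d
    rw [e1] at hkey
    rw [inv2 (I * (Real.tan φ : ℂ)) (x (-(k : ℤ) - 1)) hd1 ht1] at hkey
    rw [hkey]
    congr 2
    push_cast
    ring
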